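/- If g ∈ A₁, then the Fourier transform ĝ belongs to L¹(ℝ). -/

import Mathlib

open MeasureTheory Filter
open FourierTransform Real Complex
open scoped Classical

noncomputable section

/-- The Fourier transform `ĝ(α) = ∫ g(x) e^{-2πiαx} dx` of a real-valued function. -/
def fourierT (g : ℝ → ℝ) (α : ℝ) : ℂ :=
  ∫ x : ℝ, (g x : ℂ) * Complex.exp (-(2 * Real.pi * α * x : ℝ) * Complex.I)


lemma fourierT_eq (g : ℝ → ℝ) : fourierT g = 𝓕 (fun x => (g x : ℂ)) := by
  funext α
  rw [Real.fourier_real_eq_integral_exp_smul]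
  unfold fourierT
  congr 1
  funext x
  rw [smul_eq_mul, mul_comm]
  norm_num
  left; ring_nf

lemma fourierT_cont (g : ℝ → ℝ) (hg : Integrable g) : Continuous (fourierT g) := by
  rw [fourierT_eq]
  exact VectorFourier.fourierIntegral_continuous Real.continuous_fourierChar
    (by exact continuous_inner) hg.ofReal

lemma fourierT_norm_le (g : ℝ → ℝ) (hpos : ∀ x, 0 ≤ g x) (α : ℝ) :
    ‖fourierT g α‖ ≤ ∫ x, g x := by
  rw [fourierT_eq]
  refine (VectorFourier.norm_fourierIntegral_le_integral_norm _ _ _ _ _).trans (le_of_eq ?_)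
  congr 1; funext x; rw [Complex.norm_real]; exact Real.norm_of_nonneg (hpos x)

lemma integrand_integrable (g : ℝ → ℝ) (hc : Continuous g) (hint : Integrable g) (α : ℝ) :
    Integrable (fun x : ℝ => (g x : ℂ) * Complex.exp (-(2 * Real.pi * α * x : ℝ) * Complex.I)) := by
  apply Integrable.mono' hint.norm
  · exact (Complex.continuous_ofReal.comp hc).mul (Complex.continuous_exp.comp
      (by continuity)) |>.aestronglyMeasurable
  · refine ae_of_all _ fun x => ?_
    rw [norm_mul]
    have h1 : ‖Complex.exp (-(2 * Real.pi * α * x : ℝ) * Complex.I)‖ = 1 := by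
      rw [Complex.norm_exp]
      simp
    rw [h1, mul_one, Complex.norm_real]

lemma fourierT_im (g : ℝ → ℝ) (hc : Continuous g) (heven : ∀ x, g (-x) = g x)
    (hint : Integrable g) (α : ℝ) : (fourierT g α).im = 0 := by
  unfold fourierT
  have him := (Complex.imCLM).integral_comp_comm (integrand_integrable g hc hint α)
  simp only [Complex.imCLM_apply] at him
  rw [← him]
  have h : ∀ x : ℝ, ((g x : ℂ) * Complex.exp (-(2 * Real.pi * α * x : ℝ) * Complex.I)).im
      = g x * Real.sin (-(2 * Real.pi * α * x)) := by
    intro x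
    rw [show (-(2 * Real.pi * α * x : ℝ) : ℂ) * Complex.I = ((-(2 * Real.pi * α * x) : ℝ) : ℂ) * Complex.I by push_cast; ring]
    simp only [Complex.mul_im, Complex.ofReal_re, Complex.ofReal_im,
      Complex.exp_ofReal_mul_I_re, Complex.exp_ofReal_mul_I_im]
    ring
  simp_rw [h]
  set F : ℝ → ℝ := fun x => g x * Real.sin (-(2 * Real.pi * α * x)) with hF
  have hodd : ∀ x, F (-x) = -F x := by
    intro x
    simp only [hF, heven x]
    rw [show -(2 * Real.pi * α * -x) = -(-(2 * Real.pi * α * x)) by ring, Real.sin_neg]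
    ring
  have := integral_neg_eq_self F (volume : Measure ℝ)
  simp_rw [hodd, integral_neg] at this
  linarith

lemma gauss_pos (g : ℝ → ℝ) (hc : Continuous g) (hpos : ∀ x, 0 ≤ g x)
    (hint : Integrable g) {ε : ℝ} (hε : 0 < ε) :
    0 ≤ ∫ α : ℝ, (fourierT g α).re * Real.exp (-(Real.pi * ε) * α ^ 2) := by
  have hπε : 0 < Real.pi * ε := mul_pos Real.pi_pos hε
  have hGint : Integrable (fun α : ℝ => Real.exp (-(Real.pi * ε) * α ^ 2)) :=
    integrable_exp_neg_mul_sq hπε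
  -- the complex weighted integral
  set Q : ℝ → ℂ := fun α => fourierT g α * ((Real.exp (-(Real.pi * ε) * α ^ 2) : ℝ) : ℂ) with hQ
  have hQint : Integrable Q := by
    refine hGint.ofReal.bdd_mul (c := ∫ x, g x) ((fourierT_cont g hint).aestronglyMeasurable) ?_
    exact ae_of_all _ fun α => fourierT_norm_le g hpos α
  -- Fubini
  set P : ℝ → ℝ → ℂ := fun α x => (g x : ℂ) * Complex.exp (-(2 * Real.pi * α * x : ℝ) * Complex.I)
    * ((Real.exp (-(Real.pi * ε) * α ^ 2) : ℝ) : ℂ) with hP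
  have hPint : Integrable (Function.uncurry P) ((volume : Measure ℝ).prod volume) := by
    refine Integrable.mono' (hGint.mul_prod hint.norm) ?_ (ae_of_all _ fun p => ?_)
    · apply Continuous.aestronglyMeasurable
      apply Continuous.mul
      apply Continuous.mul
      · exact Complex.continuous_ofReal.comp (hc.comp continuous_snd)
      · exact Complex.continuous_exp.comp (by continuity)
      · exact Complex.continuous_ofReal.comp (by continuity)
    · simp only [Function.uncurry, hP, norm_mul, Complex.norm_real]
      have h1 : ‖Complex.exp (-(2 * Real.pi * p.1 * p.2 : ℝ) * Complex.I)‖ = 1 := by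
        rw [Complex.norm_exp]; simp
      rw [h1, mul_one, Real.norm_of_nonneg (Real.exp_pos _).le, mul_comm]
  have hswap := integral_integral_swap hPint
  -- LHS of swap equals ∫ Q
  have hL : (∫ α : ℝ, ∫ x : ℝ, P α x) = ∫ α, Q α := by
    congr 1; funext α
    simp only [hP, hQ]
    unfold fourierT
    rw [← integral_mul_const]
  -- gaussian Fourier transform
  have hb : (0:ℝ) < ((ε : ℂ)).re := by simpa using hε
  have hgauss := fourier_gaussian_pi (b := (ε : ℂ)) hb
  -- inner integral over α
  have hR : ∀ x : ℝ, (∫ α : ℝ, P α x) =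
      (g x : ℂ) * ((Real.exp (-Real.pi / ε * x ^ 2) / ε ^ ((1:ℝ)/2) : ℝ) : ℂ) := by
    intro x
    have hcast : ∀ α : ℝ, P α x = (g x : ℂ) *
        (Complex.exp ((-2 * Real.pi * α * x : ℝ) * Complex.I) • Complex.exp (-(Real.pi:ℂ) * (ε:ℂ) * (α:ℂ) ^ 2)) := by
      intro α
      simp only [hP, smul_eq_mul]
      rw [Complex.ofReal_exp]
      push_cast
      ring_nf
    simp_rw [hcast]
    rw [integral_const_mul]
    have : (∫ α : ℝ, Complex.exp ((-2 * Real.pi * α * x : ℝ) * Complex.I) •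
        Complex.exp (-(Real.pi:ℂ) * (ε:ℂ) * (α:ℂ) ^ 2)) = 𝓕 (fun a : ℝ => Complex.exp (-(Real.pi:ℂ) * (ε:ℂ) * (a:ℂ) ^ 2)) x := by
      rw [Real.fourier_real_eq_integral_exp_smul]
    rw [this, hgauss]
    congr 1
    show 1 / (ε:ℂ) ^ (1/2 : ℂ) * Complex.exp (-(Real.pi:ℂ) / ε * (x:ℂ) ^ 2) = _
    have he1 : ((ε : ℂ) ^ (1/2 : ℂ)) = ((ε ^ ((1:ℝ)/2) : ℝ) : ℂ) := by
      rw [Complex.ofReal_cpow hε.le]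
      norm_num
    rw [he1, show -(Real.pi:ℂ)/(ε:ℂ)*(x:ℂ)^2 = ((-Real.pi/ε*x^2 : ℝ):ℂ) by push_cast; ring,
      ← Complex.ofReal_exp, Complex.ofReal_div]
    ring
  have key : (∫ α, Q α) = ((∫ x : ℝ, g x * (Real.exp (-Real.pi/ε*x^2) / ε ^ ((1:ℝ)/2)) : ℝ) : ℂ) := by
    rw [← hL, hswap]
    have : (∫ x : ℝ, ∫ α : ℝ, P α x)
        = ∫ x : ℝ, ((g x * (Real.exp (-Real.pi/ε*x^2) / ε ^ ((1:ℝ)/2)) : ℝ) : ℂ) := by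
      congr 1; funext x; rw [hR x]; norm_cast
    rw [this]; exact _root_.integral_ofReal
  have hre := (Complex.reCLM).integral_comp_comm hQint
  simp only [Complex.reCLM_apply] at hre
  have hQre : ∀ α, (Q α).re = (fourierT g α).re * Real.exp (-(Real.pi*ε)*α^2) := by
    intro α
    simp only [hQ, Complex.mul_re, Complex.ofReal_re, Complex.ofReal_im, mul_zero, sub_zero]
  calc (0:ℝ) ≤ ∫ x : ℝ, g x * (Real.exp (-Real.pi/ε*x^2) / ε ^ ((1:ℝ)/2)) := by
        refine integral_nonneg fun x => mul_nonneg (hpos x)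
          (div_nonneg (Real.exp_pos _).le (Real.rpow_nonneg hε.le _))
    _ = (∫ α, Q α).re := by rw [key]; simp
    _ = ∫ α, (Q α).re := hre.symm
    _ = ∫ α : ℝ, (fourierT g α).re * Real.exp (-(Real.pi*ε)*α^2) := by simp_rw [hQre]


/-- The class `A₁` of continuous, even, non-negative functions `g ∈ L¹(ℝ)`
with `ĝ(α) ≤ 0` for `|α| ≥ 1` (such `ĝ` is real-valued since `g` is even and real). -/
def memA1 (g : ℝ → ℝ) : Prop :=
  Continuous g ∧ (∀ x, g (-x) = g x) ∧ (∀ x, 0 ≤ g x) ∧ MeasureTheory.Integrable g ∧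
    ∀ α : ℝ, 1 ≤ |α| → (fourierT g α).re ≤ 0

/-- The functional `ρ₁(g) = ĝ(0) + ∫_{-1}^{1} ĝ(α)|α| dα`. -/
def rho1 (g : ℝ → ℝ) : ℝ :=
  (fourierT g 0).re + ∫ α in (-1 : ℝ)..1, (fourierT g α).re * |α|

/-- The constant `C₁ = inf ρ₁(g)/g(0)` over nonzero `g ∈ A₁` with `g(0) > 0`. -/
def C1 : ℝ :=
  sInf {c : ℝ | ∃ g : ℝ → ℝ, memA1 g ∧ g ≠ 0 ∧ 0 < g 0 ∧ c = rho1 g / g 0}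

/-- If `g ∈ A₁`, then the Fourier transform `ĝ` belongs to `L¹(ℝ)`. -/
theorem statement10 (g : ℝ → ℝ) (hg : memA1 g) : Integrable (fourierT g) := by
  obtain ⟨hc, heven, hpos, hint, hneg⟩ := hg
  set φ : ℝ → ℝ := fun α => (fourierT g α).re with hφ
  have hφc : Continuous φ := Complex.continuous_re.comp (fourierT_cont g hint)
  set M : ℝ := ∫ x, g x with hM
  have hφbd : ∀ α, |φ α| ≤ M := fun α =>
    (Complex.abs_re_le_norm _).trans (fourierT_norm_le g hpos α)
  set s : Set ℝ := {α : ℝ | 1 ≤ |α|} with hsdef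
  have hs : MeasurableSet s := (isClosed_le continuous_const _root_.continuous_abs).measurableSet
  have hscompl : sᶜ = Set.Ioo (-1 : ℝ) 1 := by
    ext α; simp [hsdef, Set.mem_Ioo, abs_lt, not_le, and_comm]
  -- uniform bound for truncated integrals
  have key : ∀ n : ℕ, ∫ α in s, (-φ α) * Real.exp (-(Real.pi * (1/(n+1))) * α ^ 2) ≤ 2 * M := by
    intro n
    have hεpos : (0:ℝ) < 1/(n+1) := by positivity
    have hπε : (0:ℝ) < Real.pi * (1/(n+1)) := mul_pos Real.pi_pos hεpos
    have hGn : Integrable (fun α : ℝ => φ α * Real.exp (-(Real.pi * (1/(n+1))) * α ^ 2)) := by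
      refine (integrable_exp_neg_mul_sq hπε).bdd_mul (c := M) hφc.aestronglyMeasurable (ae_of_all _ fun α => ?_)
      exact (Real.norm_eq_abs _) ▸ hφbd α
    have h0 := gauss_pos g hc hpos hint hεpos
    have hsplit := integral_add_compl hs hGn
    have hGle1 : ∀ α : ℝ, Real.exp (-(Real.pi * (1/(n+1))) * α ^ 2) ≤ 1 := by
      intro α
      rw [Real.exp_le_one_iff]
      nlinarith [sq_nonneg α]
    have hcompl_le : ∫ α in sᶜ, φ α * Real.exp (-(Real.pi * (1/(n+1))) * α ^ 2) ≤ 2 * M := by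
      have hconst : IntegrableOn (fun _ : ℝ => M) sᶜ := by
        rw [hscompl]
        exact integrableOn_const measure_Ioo_lt_top.ne
      have hle : ∀ α ∈ sᶜ, φ α * Real.exp (-(Real.pi * (1/(n+1))) * α ^ 2) ≤ M := by
        intro α _
        calc φ α * Real.exp (-(Real.pi * (1/(n+1))) * α ^ 2)
            ≤ |φ α| * 1 := by
              apply mul_le_mul (le_abs_self _) (hGle1 α) (Real.exp_pos _).le (abs_nonneg _)
          _ ≤ M := by rw [mul_one]; exact hφbd α
      calc ∫ α in sᶜ, φ α * Real.exp (-(Real.pi * (1/(n+1))) * α ^ 2)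
          ≤ ∫ _ in sᶜ, M := setIntegral_mono_on hGn.integrableOn hconst hs.compl hle
        _ = 2 * M := by
            rw [setIntegral_const, hscompl, Real.volume_real_Ioo, smul_eq_mul]
            norm_num
    have hminus : ∫ α in s, (-φ α) * Real.exp (-(Real.pi * (1/(n+1))) * α ^ 2)
        = -∫ α in s, φ α * Real.exp (-(Real.pi * (1/(n+1))) * α ^ 2) := by
      rw [← integral_neg]; congr 1; funext α; ring
    rw [hminus]
    linarith
  -- finiteness of the lintegral of -φ on s via Fatou
  have hMnn : 0 ≤ M := integral_nonneg hpos
  have hφs_nonpos : ∀ α ∈ s, φ α ≤ 0 := fun α hα => hneg α hα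
  have hfn_meas : ∀ n : ℕ, Measurable fun α =>
      ENNReal.ofReal ((-φ α) * Real.exp (-(Real.pi * (1/(n+1))) * α ^ 2)) := by
    intro n
    exact ENNReal.measurable_ofReal.comp ((hφc.neg.mul (by continuity)).measurable)
  have hfn_le : ∀ n : ℕ, ∫⁻ α in s,
      ENNReal.ofReal ((-φ α) * Real.exp (-(Real.pi * (1/(n+1))) * α ^ 2))
      ≤ ENNReal.ofReal (2 * M) := by
    intro n
    have hεpos : (0:ℝ) < 1/(n+1) := by positivity
    have hπε : (0:ℝ) < Real.pi * (1/(n+1)) := mul_pos Real.pi_pos hεpos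
    have hGn : Integrable (fun α : ℝ => φ α * Real.exp (-(Real.pi * (1/(n+1))) * α ^ 2)) := by
      refine (integrable_exp_neg_mul_sq hπε).bdd_mul (c := M) hφc.aestronglyMeasurable (ae_of_all _ fun α => ?_)
      exact (Real.norm_eq_abs _) ▸ hφbd α
    have hGn' : IntegrableOn
        (fun α : ℝ => (-φ α) * Real.exp (-(Real.pi * (1/(n+1))) * α ^ 2)) s := by
      have : (fun α : ℝ => (-φ α) * Real.exp (-(Real.pi * (1/(n+1))) * α ^ 2))
          = fun α : ℝ => -(φ α * Real.exp (-(Real.pi * (1/(n+1))) * α ^ 2)) := by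
        funext α; ring
      rw [this]
      exact hGn.neg.integrableOn
    have hnn : 0 ≤ᵐ[volume.restrict s]
        fun α : ℝ => (-φ α) * Real.exp (-(Real.pi * (1/(n+1))) * α ^ 2) := by
      rw [EventuallyLE, ae_restrict_iff' hs]
      refine ae_of_all _ fun α hα => ?_
      exact mul_nonneg (neg_nonneg.2 (hφs_nonpos α hα)) (Real.exp_pos _).le
    rw [← ofReal_integral_eq_lintegral_ofReal hGn' hnn]
    exact ENNReal.ofReal_le_ofReal (key n)
  have htend : ∀ α : ℝ, Tendsto
      (fun n : ℕ => ENNReal.ofReal ((-φ α) * Real.exp (-(Real.pi * (1/(n+1))) * α ^ 2)))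
      atTop (nhds (ENNReal.ofReal (-φ α))) := by
    intro α
    have h1 : Tendsto (fun n : ℕ => (1:ℝ)/(n+1)) atTop (nhds 0) :=
      tendsto_one_div_add_atTop_nhds_zero_nat
    have h2 : Tendsto (fun n : ℕ => (-φ α) * Real.exp (-(Real.pi * (1/(n+1))) * α ^ 2))
        atTop (nhds ((-φ α) * Real.exp (-(Real.pi * 0) * α ^ 2))) := by
      apply Tendsto.const_mul
      apply (Real.continuous_exp.tendsto _).comp
      have : Tendsto (fun n : ℕ => -(Real.pi * (1/(n+1))) * α ^ 2) atTop
          (nhds (-(Real.pi * 0) * α ^ 2)) := by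
        apply Tendsto.mul_const
        exact (h1.const_mul Real.pi).neg
      exact this
    have h3 : (-φ α) * Real.exp (-(Real.pi * 0) * α ^ 2) = -φ α := by simp
    rw [h3] at h2
    exact (ENNReal.continuous_ofReal.tendsto _).comp h2
  have hfin : ∫⁻ α in s, ENNReal.ofReal (-φ α) ≤ ENNReal.ofReal (2 * M) := by
    have hliminf : (fun α : ℝ => ENNReal.ofReal (-φ α)) = fun α =>
        Filter.liminf (fun n : ℕ =>
          ENNReal.ofReal ((-φ α) * Real.exp (-(Real.pi * (1/(n+1))) * α ^ 2))) atTop := by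
      funext α
      exact ((htend α).liminf_eq).symm
    calc ∫⁻ α in s, ENNReal.ofReal (-φ α)
        = ∫⁻ α in s, Filter.liminf (fun n : ℕ =>
            ENNReal.ofReal ((-φ α) * Real.exp (-(Real.pi * (1/(n+1))) * α ^ 2))) atTop := by
          rw [← hliminf]
      _ ≤ Filter.liminf (fun n : ℕ => ∫⁻ α in s,
            ENNReal.ofReal ((-φ α) * Real.exp (-(Real.pi * (1/(n+1))) * α ^ 2))) atTop :=
          lintegral_liminf_le hfn_meas
      _ ≤ ENNReal.ofReal (2 * M) := by
          apply Filter.liminf_le_of_frequently_le' 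
          exact Filter.Frequently.of_forall hfn_le
  -- integrability of φ on s
  have hIs : IntegrableOn φ s := by
    constructor
    · exact hφc.aestronglyMeasurable.restrict
    · rw [HasFiniteIntegral]
      have hcongr : ∫⁻ α in s, ‖φ α‖ₑ = ∫⁻ α in s, ENNReal.ofReal (-φ α) := by
        apply lintegral_congr_ae
        refine (ae_restrict_iff' hs).2 (ae_of_all _ fun α hα => ?_)
        show (‖φ α‖ₑ : ENNReal) = ENNReal.ofReal (-φ α)
        rw [← ofReal_norm, Real.norm_eq_abs, abs_of_nonpos (hφs_nonpos α hα)]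
      rw [hcongr]
      exact lt_of_le_of_lt hfin ENNReal.ofReal_lt_top
  have hIsc : IntegrableOn φ sᶜ := by
    rw [hscompl]
    exact (hφc.integrableOn_Icc (a := -1) (b := 1)).mono_set Set.Ioo_subset_Icc_self
  have hφint : Integrable φ := by
    have := hIs.union hIsc
    rw [Set.union_compl_self] at this
    exact integrableOn_univ.mp this
  have heq : fourierT g = fun α => ((φ α : ℝ) : ℂ) := by
    funext α
    apply Complex.ext
    · rfl
    · rw [fourierT_im g hc heven hint α]; simp
  rw [heq]
  exact hφint.ofReal
end
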